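/- In the Markov chain M' on simply connected acyclic digraphs over N vertices (transitions: delete a non-bridge arc, reverse a bridge arc, or add an arc preserving acyclicity), any two states are connected by a sequence of at most (N+7)(N−3/2) transitions. -/

import Mathlib

/-- A digraph given by its arc set is acyclic if no vertex lies on a directed cycle. -/
def DAcyclic {V : Type*} (A : Finset (V × V)) : Prop :=
  ∀ a : V, ¬ Relation.TransGen (fun x y => (x, y) ∈ A) a a

/-- The underlying undirected simple graph of an arc set. -/
def toGraph {V : Type*} [DecidableEq V] (A : Finset (V × V)) : SimpleGraph V where
  Adj a b := a ≠ b ∧ ((a, b) ∈ A ∨ (b, a) ∈ A)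
  symm := ⟨fun _ _ h => ⟨h.1.symm, h.2.symm⟩⟩
  loopless := ⟨fun _ h => h.1 rfl⟩

instance {V : Type*} [DecidableEq V] (A : Finset (V × V)) :
    DecidableRel (toGraph A).Adj :=
  fun a b => inferInstanceAs (Decidable (a ≠ b ∧ ((a, b) ∈ A ∨ (b, a) ∈ A)))

/-- One transition of the Markov chain `M'`: delete a non-bridge arc, reverse a
bridge arc, or add an arc so that the result is acyclic. -/
def Move {V : Type*} [DecidableEq V] (X Y : Finset (V × V)) : Prop :=
  (∃ i j : V, (i, j) ∈ X ∧ ¬(toGraph X).IsBridge s(i, j) ∧ Y = X.erase (i, j)) ∨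
  (∃ i j : V, (i, j) ∈ X ∧ (toGraph X).IsBridge s(i, j) ∧
    Y = insert (j, i) (X.erase (i, j))) ∨
  (∃ i j : V, (i, j) ∉ X ∧ Y = insert (i, j) X ∧ DAcyclic Y)

set_option linter.unusedSectionVars false
set_option linter.unusedVariables false

section Aux
variable {V : Type*} [DecidableEq V] [Fintype V]

lemma toGraph_adj (A : Finset (V × V)) (a b : V) :
    (toGraph A).Adj a b ↔ a ≠ b ∧ ((a, b) ∈ A ∨ (b, a) ∈ A) := Iff.rfl

lemma dacyclic_mono {A B : Finset (V × V)} (h : A ⊆ B) (hB : DAcyclic B) : DAcyclic A := by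
  intro a ha
  exact hB a (Relation.TransGen.mono (fun x y hxy => h hxy) a a ha)

lemma dacyclic_of_rank (A : Finset (V × V)) (f : V → ℕ)
    (hf : ∀ p ∈ A, f p.1 < f p.2) : DAcyclic A := by
  intro a ha
  have key : ∀ x y : V, Relation.TransGen (fun x y => (x, y) ∈ A) x y → f x < f y := by
    intro x y h
    induction h with
    | single h => exact hf _ h
    | tail _ h ih => exact ih.trans (hf _ h)
  exact lt_irrefl _ (key a a ha)

lemma exists_rank {A : Finset (V × V)} (h : DAcyclic A) :
    ∃ f : V → ℕ, ∀ p ∈ A, f p.1 < f p.2 := by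
  classical
  refine ⟨fun x => (Finset.univ.filter
    (fun y => Relation.TransGen (fun u v => (u, v) ∈ A) y x)).card, ?_⟩
  · rintro ⟨a, b⟩ hab
    apply Finset.card_lt_card
    constructor
    · intro z hz
      simp only [Finset.mem_filter, Finset.mem_univ, true_and] at hz ⊢
      exact hz.tail hab
    · intro hsub
      have : a ∈ Finset.univ.filter
          (fun y => Relation.TransGen (fun u v => (u, v) ∈ A) y b) := by
        simp only [Finset.mem_filter, Finset.mem_univ, true_and]
        exact Relation.TransGen.single hab
      have := hsub this
      simp only [Finset.mem_filter, Finset.mem_univ, true_and] at this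
      exact h a this

lemma exists_source {A : Finset (V × V)} [Nonempty V] (h : DAcyclic A) :
    ∃ r : V, ∀ j : V, (j, r) ∉ A := by
  obtain ⟨f, hf⟩ := exists_rank h
  obtain ⟨r, -, hr⟩ := Finset.exists_min_image Finset.univ f ⟨Classical.arbitrary V, Finset.mem_univ _⟩
  exact ⟨r, fun j hj => absurd (hr j (Finset.mem_univ j)) (not_le.mpr (hf (j, r) hj))⟩

lemma toGraph_mono {A B : Finset (V × V)} (h : A ⊆ B) : toGraph A ≤ toGraph B :=
  fun a b hab => ⟨hab.1, hab.2.imp (h ·) (h ·)⟩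

lemma dacyclic_no_swap {A : Finset (V × V)} (h : DAcyclic A) {i j : V}
    (hij : (i, j) ∈ A) : (j, i) ∉ A := fun hji =>
  h i ((Relation.TransGen.single hij).tail hji)

lemma dacyclic_ne {A : Finset (V × V)} (h : DAcyclic A) {i j : V}
    (hij : (i, j) ∈ A) : i ≠ j := by
  rintro rfl; exact h i (Relation.TransGen.single hij)

lemma card_le_choose {A : Finset (V × V)} (h : DAcyclic A) :
    A.card ≤ (Fintype.card V).choose 2 := by
  have hinj : Set.InjOn (fun p : V × V => s(p.1, p.2)) A := by
    rintro ⟨a, b⟩ ha ⟨c, d⟩ hc hev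
    simp only [Sym2.eq, Sym2.rel_iff', Prod.mk.injEq, Prod.swap_prod_mk] at hev
    rcases hev with ⟨rfl, rfl⟩ | ⟨rfl, rfl⟩
    · rfl
    · exact absurd hc (dacyclic_no_swap h ha)
  calc A.card ≤ (toGraph A).edgeFinset.card := by
        apply Finset.card_le_card_of_injOn _ _ hinj
        rintro ⟨a, b⟩ ha
        rw [Finset.mem_coe, SimpleGraph.mem_edgeFinset, SimpleGraph.mem_edgeSet]
        exact ⟨dacyclic_ne h ha, Or.inl ha⟩
    _ ≤ (Fintype.card V).choose 2 := SimpleGraph.card_edgeFinset_le_card_choose_two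

end Aux
section Aux2
variable {V : Type*} [DecidableEq V] [Fintype V]

def dstar (r : V) : Finset (V × V) := (Finset.univ.erase r).image (fun j => (r, j))

lemma mem_dstar {r a b : V} : (a, b) ∈ dstar r ↔ a = r ∧ b ≠ r := by
  simp only [dstar, Finset.mem_image, Finset.mem_erase, Finset.mem_univ, and_true,
    Prod.mk.injEq]
  constructor
  · rintro ⟨j, hj, rfl, rfl⟩; exact ⟨rfl, hj⟩
  · rintro ⟨rfl, hb⟩; exact ⟨b, hb, rfl, rfl⟩

lemma card_dstar (r : V) : (dstar r : Finset (V × V)).card = Fintype.card V - 1 := by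
  rw [dstar, Finset.card_image_of_injective _ (fun a b h => by
    simpa using congrArg Prod.snd h)]
  rw [Finset.card_erase_of_mem (Finset.mem_univ r), Finset.card_univ]

lemma dstar_dacyclic (r : V) : DAcyclic (dstar r : Finset (V × V)) := by
  apply dacyclic_of_rank _ (fun v => if v = r then 0 else 1)
  rintro ⟨a, b⟩ hab
  rw [mem_dstar] at hab
  simp [hab.1, hab.2]

lemma conn_of_hub (X : Finset (V × V)) (s : V)
    (h : ∀ v : V, (toGraph X).Reachable s v) : (toGraph X).Connected := by
  haveI : Nonempty V := ⟨s⟩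
  exact SimpleGraph.Connected.mk (fun u v => (h u).symm.trans (h v))

lemma dstar_conn [Nonempty V] (r : V) : (toGraph (dstar r : Finset (V × V))).Connected := by
  apply conn_of_hub _ r
  intro v
  by_cases hv : v = r
  · subst hv; rfl
  · exact SimpleGraph.Adj.reachable ⟨Ne.symm hv, Or.inl (mem_dstar.mpr ⟨rfl, hv⟩)⟩

lemma good_dstar [Nonempty V] (r : V) :
    (toGraph (dstar r : Finset (V × V))).Connected ∧ DAcyclic (dstar r : Finset (V × V)) :=
  ⟨dstar_conn r, dstar_dacyclic r⟩

lemma isolated_reachable {G : SimpleGraph V} {s : V} (hiso : ∀ y, ¬ G.Adj s y)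
    {t : V} (h : G.Reachable s t) : s = t := by
  obtain ⟨w⟩ := h
  cases w with
  | nil => rfl
  | cons a _ => exact absurd a (hiso _)

lemma dstar_bridge {r s : V} (h : r ≠ s) :
    (toGraph (dstar r : Finset (V × V))).IsBridge s(r, s) := by
  rw [SimpleGraph.isBridge_iff]
  intro hre
  have hiso : ∀ y, ¬ (toGraph (dstar r : Finset (V × V)) \
      SimpleGraph.fromEdgeSet {s(r, s)}).Adj s y := by
    intro y hy
    rw [SimpleGraph.sdiff_adj] at hy
    obtain ⟨⟨hne, hmem⟩, hnot⟩ := hy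
    rcases hmem with hm | hm
    · exact absurd (mem_dstar.mp hm).1 h.symm
    · obtain ⟨rfl, -⟩ := mem_dstar.mp hm
      exact hnot ((SimpleGraph.fromEdgeSet_adj _).mpr ⟨by rw [Sym2.eq_swap]; exact Set.mem_singleton _, hne⟩)
  exact h (isolated_reachable hiso hre.symm).symm

lemma not_bridge_mid {X : Finset (V × V)} {i j m : V}
    (h1 : (m, i) ∈ X ∨ (i, m) ∈ X) (h2 : (m, j) ∈ X ∨ (j, m) ∈ X)
    (hmi : m ≠ i) (hmj : m ≠ j) (hij : i ≠ j) :
    ¬ (toGraph X).IsBridge s(i, j) := by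
  rw [SimpleGraph.isBridge_iff]
  intro hnr
  apply hnr
  have a1 : (toGraph X \ SimpleGraph.fromEdgeSet {s(i, j)}).Adj i m := by
    rw [SimpleGraph.sdiff_adj]
    refine ⟨⟨hmi.symm, h1.symm⟩, ?_⟩
    rw [SimpleGraph.fromEdgeSet_adj]
    rintro ⟨he, -⟩
    simp only [Set.mem_singleton_iff, Sym2.eq, Sym2.rel_iff', Prod.mk.injEq,
      Prod.swap_prod_mk] at he
    rcases he with ⟨-, rfl⟩ | ⟨rfl, -⟩
    · exact hmj rfl
    · exact hij rfl
  have a2 : (toGraph X \ SimpleGraph.fromEdgeSet {s(i, j)}).Adj m j := by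
    rw [SimpleGraph.sdiff_adj]
    refine ⟨⟨hmj, h2⟩, ?_⟩
    rw [SimpleGraph.fromEdgeSet_adj]
    rintro ⟨he, -⟩
    simp only [Set.mem_singleton_iff, Sym2.eq, Sym2.rel_iff', Prod.mk.injEq,
      Prod.swap_prod_mk] at he
    rcases he with ⟨rfl, -⟩ | ⟨-, rfl⟩
    · exact hmi rfl
    · exact hij rfl
  exact a1.reachable.trans a2.reachable

end Aux2
section Reach
variable {V : Type*} [DecidableEq V] [Fintype V]

def Good (X : Finset (V × V)) : Prop := (toGraph X).Connected ∧ DAcyclic X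

inductive Reach : ℕ → Finset (V × V) → Finset (V × V) → Prop
  | refl (k : ℕ) {X : Finset (V × V)} : Good X → Reach k X X
  | head {X Y Z : Finset (V × V)} {k : ℕ} :
      Move X Y → Good X → Reach k Y Z → Reach (k + 1) X Z

lemma Reach.good_left {k : ℕ} {X Y : Finset (V × V)} (h : Reach k X Y) : Good X := by
  cases h with
  | refl _ h => exact h
  | head _ h _ => exact h

lemma Reach.mono {k m : ℕ} {X Y : Finset (V × V)} (h : Reach k X Y) (hkm : k ≤ m) :
    Reach m X Y := by
  induction h generalizing m with
  | refl _ h => exact Reach.refl m h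
  | head hmv hg _ ih =>
    obtain ⟨m', rfl⟩ : ∃ m', m = m' + 1 := ⟨m - 1, by omega⟩
    exact Reach.head hmv hg (ih (by omega))

lemma Reach.trans {k m : ℕ} {X Y Z : Finset (V × V)} (h1 : Reach k X Y)
    (h2 : Reach m Y Z) : Reach (k + m) X Z := by
  induction h1 with
  | refl k h => exact h2.mono (by omega)
  | head hmv hg _ ih => exact (Reach.head hmv hg (ih h2)).mono (by omega)

lemma Reach.good_right {k : ℕ} {X Y : Finset (V × V)} (h : Reach k X Y) : Good Y := by
  induction h with
  | refl _ h => exact h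
  | head _ _ _ ih => exact ih

lemma Reach.tail {k : ℕ} {X Y Z : Finset (V × V)} (h : Reach k X Y) (hmv : Move Y Z)
    (hZ : Good Z) : Reach (k + 1) X Z :=
  h.trans (Reach.head hmv h.good_right (Reach.refl 0 hZ))

lemma Reach.toList {k : ℕ} {X Y : Finset (V × V)} (h : Reach k X Y) :
    ∃ l : List (Finset (V × V)), l.head? = some X ∧ l.getLast? = some Y ∧
      (∀ Z ∈ l, Good Z) ∧ l.Chain' Move ∧ l.length - 1 ≤ k := by
  induction h with
  | refl k h => exact ⟨[_], rfl, rfl, by simpa using h, List.isChain_singleton _, by simp⟩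
  | head hmv hg hr ih =>
    obtain ⟨l, hh, hl, hgood, hch, hlen⟩ := ih
    have hne : l ≠ [] := by rintro rfl; simp at hh
    refine ⟨_ :: l, rfl, ?_, ?_, ?_, ?_⟩
    · rw [List.getLast?_cons, hl]; rfl
    · intro Z hZ
      rcases List.mem_cons.mp hZ with rfl | hZ
      · exact hg
      · exact hgood Z hZ
    · show List.IsChain Move (_ :: l)
      rw [List.isChain_cons]
      exact ⟨fun z hz => by rw [hh] at hz; cases hz; exact hmv, hch⟩
    · have : 1 ≤ l.length := List.length_pos_iff.mpr hne
      simp only [List.length_cons]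
      omega

end Reach
section Seg
variable {V : Type*} [DecidableEq V] [Fintype V]

lemma reach_union (X : Finset (V × V)) (S : Finset (V × V)) (hd : Disjoint X S)
    (hXc : (toGraph X).Connected) (hA : DAcyclic (X ∪ S)) :
    Reach S.card X (X ∪ S) := by
  induction S using Finset.induction_on with
  | empty => simpa using Reach.refl 0 ⟨hXc, dacyclic_mono (by simp) hA⟩
  | @insert a S' ha ih =>
    have hd' : Disjoint X S' := hd.mono_right (Finset.subset_insert a S')
    have hsub : X ∪ S' ⊆ X ∪ insert a S' :=
      Finset.union_subset_union_right (Finset.subset_insert a S')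
    have hstep := ih hd' (dacyclic_mono hsub hA)
    have hXS : X ∪ insert a S' = insert a (X ∪ S') := by rw [Finset.union_insert]
    rw [hXS] at hA ⊢
    have hna : a ∉ X ∪ S' := by
      rw [Finset.mem_union]
      rintro (h | h)
      · exact Finset.disjoint_left.mp hd h (Finset.mem_insert_self a S')
      · exact ha h
    have hmv : Move (X ∪ S') (insert a (X ∪ S')) :=
      Or.inr (Or.inr ⟨a.1, a.2, by simpa using hna, by simp, hA⟩)
    have hgood : Good (insert a (X ∪ S')) :=
      ⟨hXc.mono (toGraph_mono (Finset.subset_union_left.trans (Finset.subset_insert _ _))), hA⟩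
    rw [Finset.card_insert_of_notMem ha]
    exact hstep.tail hmv hgood

lemma reach_del_general (H : Finset (V × V)) (hHg : Good H) :
    ∀ (n : ℕ) (X : Finset (V × V)), DAcyclic X → H ⊆ X →
      (∀ p : V × V, p ∈ X → p ∉ H → (p.2, p.1) ∉ H) → (X \ H).card = n →
      Reach n X H := by
  intro n
  induction n with
  | zero =>
    intro X hXa hHX hsw hcard
    have : X = H := by
      apply Finset.Subset.antisymm _ hHX
      intro p hp
      by_contra hpH
      have : p ∈ X \ H := Finset.mem_sdiff.mpr ⟨hp, hpH⟩
      rw [Finset.card_eq_zero.mp hcard] at this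
      simp at this
    subst this
    exact Reach.refl 0 hHg
  | succ n ih =>
    intro X hXa hHX hsw hcard
    obtain ⟨p, hp⟩ : (X \ H).Nonempty := Finset.card_pos.mp (by omega)
    obtain ⟨hpX, hpH⟩ := Finset.mem_sdiff.mp hp
    obtain ⟨i, j⟩ := p
    -- toGraph H is a subgraph of the graph after deleting the edge
    have hle : toGraph H ≤ toGraph X \ SimpleGraph.fromEdgeSet {s(i, j)} := by
      intro a b hab
      rw [SimpleGraph.sdiff_adj]
      obtain ⟨hne, hm⟩ := hab
      have hij : ∀ q : V × V, q ∈ H → q ≠ (i, j) := by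
        rintro q hq rfl; exact hpH hq
      constructor
      · exact ⟨hne, hm.imp (fun h => hHX h) (fun h => hHX h)⟩
      · rw [SimpleGraph.fromEdgeSet_adj]
        rintro ⟨he, -⟩
        simp only [Set.mem_singleton_iff, Sym2.eq, Sym2.rel_iff', Prod.mk.injEq,
          Prod.swap_prod_mk] at he
        rcases he with ⟨rfl, rfl⟩ | ⟨rfl, rfl⟩
        · rcases hm with h | h
          · exact hpH h
          · exact hsw _ hpX hpH h
        · rcases hm with h | h
          · exact hsw _ hpX hpH h
          · exact hpH h
    have hnb : ¬ (toGraph X).IsBridge s(i, j) := by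
      rw [SimpleGraph.isBridge_iff]
      intro hnr
      exact hnr ((hHg.1.preconnected i j).mono hle)
    have hmv : Move X (X.erase (i, j)) := Or.inl ⟨i, j, hpX, hnb, rfl⟩
    have hHY : H ⊆ X.erase (i, j) := fun q hq =>
      Finset.mem_erase.mpr ⟨by rintro rfl; exact hpH hq, hHX hq⟩
    have hYa : DAcyclic (X.erase (i, j)) := dacyclic_mono (Finset.erase_subset _ _) hXa
    have hgood : Good (X.erase (i, j)) := ⟨hHg.1.mono (toGraph_mono hHY), hYa⟩
    have hrec : Reach n (X.erase (i, j)) H := by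
      apply ih _ hYa hHY
      · intro q hq hqH
        exact hsw q (Finset.erase_subset _ _ hq) hqH
      · have : X.erase (i, j) \ H = (X \ H).erase (i, j) := by
          ext q
          simp only [Finset.mem_sdiff, Finset.mem_erase]
          tauto
        rw [this, Finset.card_erase_of_mem hp, hcard]
        omega
    exact Reach.head hmv ⟨hHg.1.mono (toGraph_mono hHX), hXa⟩ hrec

end Seg
section StarToStar
variable {V : Type*} [DecidableEq V] [Fintype V]

def stt (s r : V) (P : Finset V) : Finset (V × V) :=
  insert (s, r) ((P.image fun j => (s, j)) ∪
    ((((Finset.univ.erase r).erase s) \ P).image fun j => (r, j)))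

lemma mem_stt {s r : V} {P : Finset V} {a b : V} :
    (a, b) ∈ stt s r P ↔ (a = s ∧ b = r) ∨ (a = s ∧ b ∈ P) ∨
      (a = r ∧ b ∈ ((Finset.univ.erase r).erase s) \ P) := by
  simp only [stt, Finset.mem_insert, Finset.mem_union, Finset.mem_image, Prod.mk.injEq]
  constructor
  · rintro ((⟨rfl, rfl⟩) | (⟨j, hj, rfl, rfl⟩ | ⟨j, hj, rfl, rfl⟩))
    · exact Or.inl ⟨rfl, rfl⟩
    · exact Or.inr (Or.inl ⟨rfl, hj⟩)
    · exact Or.inr (Or.inr ⟨rfl, hj⟩)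
  · rintro (⟨rfl, rfl⟩ | ⟨rfl, hb⟩ | ⟨rfl, hb⟩)
    · exact Or.inl ⟨rfl, rfl⟩
    · exact Or.inr (Or.inl ⟨b, hb, rfl, rfl⟩)
    · exact Or.inr (Or.inr ⟨b, hb, rfl, rfl⟩)

lemma good_generic (s r : V) (hrs : s ≠ r) (X : Finset (V × V))
    (harcs : ∀ p : V × V, p ∈ X →
      p = (s, r) ∨ (p.1 = s ∧ p.2 ≠ s ∧ p.2 ≠ r) ∨ (p.1 = r ∧ p.2 ≠ s ∧ p.2 ≠ r))
    (hsr : (s, r) ∈ X)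
    (hcov : ∀ v : V, v = s ∨ v = r ∨ (s, v) ∈ X ∨ (r, v) ∈ X) :
    Good X := by
  have hadj_sr : (toGraph X).Adj s r := ⟨hrs, Or.inl hsr⟩
  constructor
  · apply conn_of_hub X s
    intro v
    rcases hcov v with rfl | rfl | hv | hv
    · rfl
    · exact hadj_sr.reachable
    · by_cases hvs : v = s
      · subst hvs; rfl
      · exact SimpleGraph.Adj.reachable ⟨Ne.symm hvs, Or.inl hv⟩
    · by_cases hvr : v = r
      · subst hvr; exact hadj_sr.reachable
      · exact hadj_sr.reachable.trans (SimpleGraph.Adj.reachable ⟨Ne.symm hvr, Or.inl hv⟩)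
  · apply dacyclic_of_rank _ (fun v => if v = s then 0 else if v = r then 1 else 2)
    rintro ⟨a, b⟩ hab
    rcases harcs _ hab with h | ⟨h1, h2, h3⟩ | ⟨h1, h2, h3⟩
    · simp only [Prod.mk.injEq] at h
      obtain ⟨rfl, rfl⟩ := h
      simp [Ne.symm hrs]
    · subst h1
      simp [h2, h3]
    · subst h1
      simp [h2, h3, Ne.symm hrs]

lemma mem_D {r s b : V} : b ∈ (Finset.univ.erase r).erase s ↔ b ≠ s ∧ b ≠ r := by
  simp [Finset.mem_erase]

lemma good_stt (s r : V) (hrs : r ≠ s) (P : Finset V)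
    (hP : P ⊆ (Finset.univ.erase r).erase s) : Good (stt s r P) := by
  apply good_generic s r (Ne.symm hrs)
  · rintro ⟨a, b⟩ hab
    rcases mem_stt.mp hab with ⟨rfl, rfl⟩ | ⟨rfl, hb⟩ | ⟨rfl, hb⟩
    · exact Or.inl rfl
    · exact Or.inr (Or.inl ⟨rfl, (mem_D.mp (hP hb)).1, (mem_D.mp (hP hb)).2⟩)
    · have := mem_D.mp (Finset.mem_sdiff.mp hb).1
      exact Or.inr (Or.inr ⟨rfl, this.1, this.2⟩)
  · exact mem_stt.mpr (Or.inl ⟨rfl, rfl⟩)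
  · intro v
    by_cases hvs : v = s
    · exact Or.inl hvs
    by_cases hvr : v = r
    · exact Or.inr (Or.inl hvr)
    have hvD : v ∈ (Finset.univ.erase r).erase s := mem_D.mpr ⟨hvs, hvr⟩
    by_cases hvP : v ∈ P
    · exact Or.inr (Or.inr (Or.inl (mem_stt.mpr (Or.inr (Or.inl ⟨rfl, hvP⟩)))))
    · exact Or.inr (Or.inr (Or.inr (mem_stt.mpr
        (Or.inr (Or.inr ⟨rfl, Finset.mem_sdiff.mpr ⟨hvD, hvP⟩⟩)))))

lemma good_stt_insert (s r j : V) (hrs : r ≠ s) (P : Finset V)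
    (hP : P ⊆ (Finset.univ.erase r).erase s)
    (hj : j ∈ (Finset.univ.erase r).erase s) :
    Good (insert (s, j) (stt s r P)) := by
  apply good_generic s r (Ne.symm hrs)
  · rintro ⟨a, b⟩ hab
    rcases Finset.mem_insert.mp hab with h | h
    · simp only [Prod.mk.injEq] at h
      obtain ⟨rfl, rfl⟩ := h
      exact Or.inr (Or.inl ⟨rfl, (mem_D.mp hj).1, (mem_D.mp hj).2⟩)
    · rcases mem_stt.mp h with ⟨rfl, rfl⟩ | ⟨rfl, hb⟩ | ⟨rfl, hb⟩
      · exact Or.inl rfl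
      · exact Or.inr (Or.inl ⟨rfl, (mem_D.mp (hP hb)).1, (mem_D.mp (hP hb)).2⟩)
      · have := mem_D.mp (Finset.mem_sdiff.mp hb).1
        exact Or.inr (Or.inr ⟨rfl, this.1, this.2⟩)
  · exact Finset.mem_insert_of_mem (mem_stt.mpr (Or.inl ⟨rfl, rfl⟩))
  · intro v
    rcases (good_stt s r hrs P hP) with -
    by_cases hvs : v = s
    · exact Or.inl hvs
    by_cases hvr : v = r
    · exact Or.inr (Or.inl hvr)
    have hvD : v ∈ (Finset.univ.erase r).erase s := mem_D.mpr ⟨hvs, hvr⟩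
    by_cases hvP : v ∈ P
    · exact Or.inr (Or.inr (Or.inl (Finset.mem_insert_of_mem
        (mem_stt.mpr (Or.inr (Or.inl ⟨rfl, hvP⟩))))))
    · exact Or.inr (Or.inr (Or.inr (Finset.mem_insert_of_mem (mem_stt.mpr
        (Or.inr (Or.inr ⟨rfl, Finset.mem_sdiff.mpr ⟨hvD, hvP⟩⟩))))))

lemma reach_loop (s r : V) (hrs : r ≠ s) (U : Finset V)
    (hU : U ⊆ (Finset.univ.erase r).erase s) :
    Reach (2 * U.card) (stt s r (((Finset.univ.erase r).erase s) \ U))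
      (stt s r ((Finset.univ.erase r).erase s)) := by
  induction U using Finset.induction_on with
  | empty =>
    rw [Finset.sdiff_empty]
    exact Reach.refl _ (good_stt s r hrs _ (le_refl _))
  | @insert j U' hj ih =>
    have hjD : j ∈ (Finset.univ.erase r).erase s := hU (Finset.mem_insert_self j U')
    have hU' : U' ⊆ (Finset.univ.erase r).erase s :=
      (Finset.subset_insert j U').trans hU
    set P := (Finset.univ.erase r).erase s \ insert j U' with hPdef
    have hPD : P ⊆ (Finset.univ.erase r).erase s := Finset.sdiff_subset
    have hjP : j ∉ P := by
      rw [hPdef]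
      simp [Finset.mem_sdiff]
    have hjs : j ≠ s := (mem_D.mp hjD).1
    have hjr : j ≠ r := (mem_D.mp hjD).2
    have goodA := good_stt s r hrs P hPD
    have goodB := good_stt_insert s r j hrs P hPD hjD
    -- move 1 : add (s, j)
    have hnotin : (s, j) ∉ stt s r P := by
      intro h
      rcases mem_stt.mp h with ⟨-, h2⟩ | ⟨-, h2⟩ | ⟨h1, -⟩
      · exact hjr h2
      · exact hjP h2
      · exact hrs h1.symm
    have hmv1 : Move (stt s r P) (insert (s, j) (stt s r P)) :=
      Or.inr (Or.inr ⟨s, j, hnotin, rfl, goodB.2⟩)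
    -- move 2 : delete (r, j)
    have hmemA : (r, j) ∈ stt s r P :=
      mem_stt.mpr (Or.inr (Or.inr ⟨rfl, Finset.mem_sdiff.mpr ⟨hjD, hjP⟩⟩))
    have hmemB : (r, j) ∈ insert (s, j) (stt s r P) := Finset.mem_insert_of_mem hmemA
    have hnb : ¬ (toGraph (insert (s, j) (stt s r P))).IsBridge s(r, j) := by
      apply not_bridge_mid (m := s)
      · exact Or.inl (Finset.mem_insert_of_mem (mem_stt.mpr (Or.inl ⟨rfl, rfl⟩)))
      · exact Or.inl (Finset.mem_insert_self _ _)
      · exact Ne.symm hrs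
      · exact Ne.symm hjs
      · exact Ne.symm hjr
    have hmv2 : Move (insert (s, j) (stt s r P))
        ((insert (s, j) (stt s r P)).erase (r, j)) :=
      Or.inl ⟨r, j, hmemB, hnb, rfl⟩
    -- the state identity
    have hins : insert j P = (Finset.univ.erase r).erase s \ U' := by
      ext x
      rw [Finset.mem_insert, hPdef]
      simp only [Finset.mem_sdiff, Finset.mem_insert]
      constructor
      · rintro (rfl | ⟨hx1, hx2⟩)
        · exact ⟨hjD, hj⟩
        · exact ⟨hx1, fun h => hx2 (Or.inr h)⟩
      · rintro ⟨hx1, hx2⟩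
        by_cases hxj : x = j
        · exact Or.inl hxj
        · exact Or.inr ⟨hx1, by tauto⟩
    have heq : (insert (s, j) (stt s r P)).erase (r, j) = stt s r ((Finset.univ.erase r).erase s \ U') := by
      have e1 : (Finset.univ.erase r).erase s \ ((Finset.univ.erase r).erase s \ U') = U' := by
        rw [sdiff_sdiff_right_self, Finset.inf_eq_inter,
          Finset.inter_eq_right.mpr hU']
      have e2 : (Finset.univ.erase r).erase s \ P = insert j U' := by
        rw [hPdef, sdiff_sdiff_right_self, Finset.inf_eq_inter,
          Finset.inter_eq_right.mpr hU]
      ext ⟨a, b⟩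
      rw [Finset.mem_erase, Finset.mem_insert, mem_stt, mem_stt, e1, e2, ← hins,
        Finset.mem_insert, Finset.mem_insert]
      simp only [Prod.mk.injEq, ne_eq]
      constructor
      · rintro ⟨hne, h | h⟩
        · exact Or.inr (Or.inl ⟨h.1, Or.inl h.2⟩)
        · rcases h with h | h | h
          · exact Or.inl h
          · exact Or.inr (Or.inl ⟨h.1, Or.inr h.2⟩)
          · rcases h.2 with rfl | hb
            · exact absurd ⟨h.1, rfl⟩ hne
            · exact Or.inr (Or.inr ⟨h.1, hb⟩)
      · rintro (h | h | h)
        · exact ⟨fun hc => by rw [h.1] at hc; exact hrs hc.1.symm, Or.inr (Or.inl h)⟩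
        · rcases h.2 with rfl | hb
          · exact ⟨fun hc => by rw [h.1] at hc; exact hrs hc.1.symm, Or.inl ⟨h.1, rfl⟩⟩
          · exact ⟨fun hc => by rw [h.1] at hc; exact hrs hc.1.symm,
              Or.inr (Or.inr (Or.inl ⟨h.1, hb⟩))⟩
        · refine ⟨fun hc => hj (hc.2 ▸ h.2), Or.inr (Or.inr (Or.inr ⟨h.1, Or.inr h.2⟩))⟩
    have hrec := ih hU'
    rw [← heq] at hrec
    have hcount : 2 * (insert j U').card = 2 * U'.card + 1 + 1 := by
      rw [Finset.card_insert_of_notMem hj]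
      ring
    rw [hcount]
    exact Reach.head hmv1 goodA (Reach.head hmv2 goodB hrec)


end StarToStar
section Final
variable {V : Type*} [DecidableEq V] [Fintype V]

lemma stt_empty {s r : V} (hrs : r ≠ s) :
    insert (s, r) ((dstar r).erase (r, s)) = stt s r (∅ : Finset V) := by
  ext ⟨a, b⟩
  rw [Finset.mem_insert, Finset.mem_erase, mem_stt, mem_dstar]
  simp only [Finset.notMem_empty, and_false, false_or, Finset.sdiff_empty, mem_D,
    Prod.mk.injEq, ne_eq]
  constructor
  · rintro (⟨rfl, rfl⟩ | ⟨hne, rfl, hbr⟩)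
    · exact Or.inl ⟨rfl, rfl⟩
    · exact Or.inr ⟨rfl, fun hbs => hne ⟨rfl, hbs⟩, hbr⟩
  · rintro (⟨rfl, rfl⟩ | ⟨rfl, hbs, hbr⟩)
    · exact Or.inl ⟨rfl, rfl⟩
    · exact Or.inr ⟨fun hc => hbs hc.2, rfl, hbr⟩

lemma stt_full (s r : V) (hrs : r ≠ s) : stt s r ((Finset.univ.erase r).erase s) = dstar s := by
  ext ⟨a, b⟩
  rw [mem_stt, mem_dstar]
  simp only [Finset.sdiff_self, Finset.notMem_empty, and_false, or_false, mem_D]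
  constructor
  · rintro (⟨rfl, rfl⟩ | ⟨rfl, hb⟩)
    · exact ⟨rfl, Ne.symm (fun h => hrs h.symm)⟩
    · exact ⟨rfl, hb.1⟩
  · rintro ⟨rfl, hb⟩
    by_cases hbr : b = r
    · exact Or.inl ⟨rfl, hbr⟩
    · exact Or.inr ⟨rfl, hb, hbr⟩

lemma reach_star_star [Nonempty V] (r s : V) :
    Reach (2 * (Fintype.card V - 2) + 1) (dstar r : Finset (V × V)) (dstar s) := by
  by_cases hrs : r = s
  · subst hrs; exact Reach.refl _ (good_dstar r)
  have hsr : s ≠ r := Ne.symm hrs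
  have hcard : ((Finset.univ.erase r).erase s).card = Fintype.card V - 2 := by
    rw [Finset.card_erase_of_mem (Finset.mem_erase.mpr ⟨hsr, Finset.mem_univ s⟩),
      Finset.card_erase_of_mem (Finset.mem_univ r), Finset.card_univ]
    omega
  have hmv1 : Move (dstar r : Finset (V × V)) (insert (s, r) ((dstar r).erase (r, s))) :=
    Or.inr (Or.inl ⟨r, s, mem_dstar.mpr ⟨rfl, hsr⟩, dstar_bridge (fun h => hrs h), rfl⟩)
  have hloop := reach_loop s r (fun h => hrs h) ((Finset.univ.erase r).erase s)
    (le_refl _)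
  rw [Finset.sdiff_self] at hloop
  rw [stt_full s r (fun h => hrs h)] at hloop
  rw [← stt_empty (fun h => hrs h)] at hloop
  rw [hcard] at hloop
  exact Reach.head hmv1 (good_dstar r) hloop

lemma dacyclic_union_star {A : Finset (V × V)} (h : DAcyclic A) {r : V}
    (hr : ∀ j : V, (j, r) ∉ A) : DAcyclic (A ∪ dstar r) := by
  obtain ⟨f, hf⟩ := exists_rank h
  apply dacyclic_of_rank _ (fun x => if x = r then 0 else f x + 1)
  rintro ⟨a, b⟩ hab
  have hbr : b ≠ r := by
    rintro rfl
    rcases Finset.mem_union.mp hab with h1 | h1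
    · exact hr a h1
    · exact (mem_dstar.mp h1).2 rfl
  rcases Finset.mem_union.mp hab with h1 | h1
  · by_cases har : a = r
    · simp [har, hbr]
    · simpa [har, hbr] using hf _ h1
  · obtain ⟨rfl, -⟩ := mem_dstar.mp h1
    simp [hbr]

end Final
/-- Any two states of `M'` are joined by at most `(N+7)(N-3/2)` transitions, i.e. by
`k` transitions with `2k ≤ (N+7)(2N-3)`. -/
theorem stmt_11 (N : ℕ) (hN : 2 ≤ N) (G H : Finset (Fin N × Fin N))
    (hG : (toGraph G).Connected ∧ DAcyclic G)
    (hH : (toGraph H).Connected ∧ DAcyclic H) :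
    ∃ l : List (Finset (Fin N × Fin N)), l.head? = some G ∧ l.getLast? = some H ∧
      (∀ X ∈ l, (toGraph X).Connected ∧ DAcyclic X) ∧
      l.Chain' Move ∧
      2 * (l.length - 1) ≤ (N + 7) * (2 * N - 3) := by
  have hNpos : 0 < N := by omega
  haveI : Nonempty (Fin N) := ⟨⟨0, hNpos⟩⟩
  obtain ⟨r, hr⟩ := exists_source hG.2
  obtain ⟨s, hs⟩ := exists_source hH.2
  have hcardV : Fintype.card (Fin N) = N := Fintype.card_fin N
  -- segment 1 : add the star at a source of G
  have hacyG : DAcyclic (G ∪ dstar r) := dacyclic_union_star hG.2 hr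
  have e1 : G ∪ (dstar r \ G) = G ∪ dstar r := Finset.union_sdiff_self_eq_union
  have h1 : Reach (dstar r \ G).card G (G ∪ dstar r) := by
    have := reach_union G (dstar r \ G) Finset.disjoint_sdiff hG.1
      (by rw [e1]; exact hacyG)
    rwa [e1] at this
  -- segment 2 : delete down to the star
  have hsub2 : dstar r ⊆ G ∪ dstar r := Finset.subset_union_right
  have hsw2 : ∀ p : Fin N × Fin N, p ∈ G ∪ dstar r → p ∉ dstar r →
      (p.2, p.1) ∉ dstar r := by
    rintro ⟨a, b⟩ hp hnp hmem
    obtain ⟨hb, -⟩ := mem_dstar.mp hmem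
    subst hb
    rcases Finset.mem_union.mp hp with h | h
    · exact hr a h
    · exact (mem_dstar.mp h).2 rfl
  have h2 : Reach ((G ∪ dstar r) \ dstar r).card (G ∪ dstar r) (dstar r) :=
    reach_del_general (dstar r) (good_dstar r) _ _ hacyG hsub2 hsw2 rfl
  -- segment 3 : star to star
  have h3 := reach_star_star (V := Fin N) r s
  -- segment 4 : add arcs of H
  have hacyH : DAcyclic (H ∪ dstar s) := dacyclic_union_star hH.2 hs
  have e4 : dstar s ∪ (H \ dstar s) = H ∪ dstar s := by
    rw [Finset.union_sdiff_self_eq_union, Finset.union_comm]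
  have h4 : Reach (H \ dstar s).card (dstar s) (H ∪ dstar s) := by
    have := reach_union (dstar s) (H \ dstar s) Finset.disjoint_sdiff
      (good_dstar s).1 (by rw [e4]; exact hacyH)
    rwa [e4] at this
  -- segment 5 : delete extra star arcs
  have hsw5 : ∀ p : Fin N × Fin N, p ∈ H ∪ dstar s → p ∉ H → (p.2, p.1) ∉ H := by
    rintro ⟨a, b⟩ hp hnp hmem
    rcases Finset.mem_union.mp hp with h | h
    · exact hnp h
    · obtain ⟨ha, -⟩ := mem_dstar.mp h
      subst ha
      exact hs b hmem
  have h5 : Reach ((H ∪ dstar s) \ H).card (H ∪ dstar s) H :=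
    reach_del_general H ⟨hH.1, hH.2⟩ _ _ hacyH Finset.subset_union_left hsw5 rfl
  have htot := (((h1.trans h2).trans h3).trans h4).trans h5
  -- cardinality bounds
  have hb1 : (dstar r \ G).card ≤ N - 1 :=
    le_trans (Finset.card_le_card Finset.sdiff_subset) (by rw [card_dstar, hcardV])
  have hb2 : ((G ∪ dstar r) \ dstar r).card + (N - 1) ≤ N.choose 2 := by
    have h := Finset.card_sdiff_add_card_eq_card hsub2
    have hle := card_le_choose hacyG
    rw [hcardV] at hle
    rw [card_dstar, hcardV] at h
    omega
  have hb4 : (H \ dstar s).card + (N - 1) ≤ N.choose 2 := by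
    have hsub : dstar s ⊆ H ∪ dstar s := Finset.subset_union_right
    have heq : (H ∪ dstar s) \ dstar s = H \ dstar s := by
      ext p; simp only [Finset.mem_sdiff, Finset.mem_union]; tauto
    have h := Finset.card_sdiff_add_card_eq_card hsub
    rw [heq] at h
    have hle := card_le_choose hacyH
    rw [hcardV] at hle
    rw [card_dstar, hcardV] at h
    omega
  have hb5 : ((H ∪ dstar s) \ H).card ≤ N - 1 := by
    have heq : (H ∪ dstar s) \ H = dstar s \ H := by
      ext p; simp only [Finset.mem_sdiff, Finset.mem_union]; tauto
    rw [heq]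
    exact le_trans (Finset.card_le_card Finset.sdiff_subset) (by rw [card_dstar, hcardV])
  obtain ⟨l, hh, hl, hgood, hch, hlen⟩ := htot.toList
  refine ⟨l, hh, hl, hgood, hch, ?_⟩
  obtain ⟨n, rfl⟩ : ∃ n, N = n + 2 := ⟨N - 2, by omega⟩
  have hch2 : 2 * ((n + 2).choose 2) = (n + 2) * (n + 1) := by
    rw [Nat.choose_two_right]
    have he : Even ((n + 2) * (n + 2 - 1)) := by
      have := Nat.even_mul_succ_self (n + 1)
      rwa [mul_comm] at this
    exact Nat.mul_div_cancel' he.two_dvd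
  rw [hcardV] at hlen
  set a1 := (dstar r \ G).card
  set n2 := ((G ∪ dstar r) \ dstar r).card
  set a4 := (H \ dstar s).card
  set n5 := ((H ∪ dstar s) \ H).card
  have hsimp : n + 2 - 2 = n := by omega
  rw [hsimp] at hlen
  have hlb : l.length - 1 ≤ a1 + n2 + (2 * n + 1) + a4 + n5 := hlen
  have hq1 : 2 * n2 + 2 * (n + 1) ≤ (n + 2) * (n + 1) := by omega
  have hq4 : 2 * a4 + 2 * (n + 1) ≤ (n + 2) * (n + 1) := by omega
  have hgoal : (n + 2 + 7) * (2 * (n + 2) - 3) = (n + 9) * (2 * n + 1) := by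
    have : 2 * (n + 2) - 3 = 2 * n + 1 := by omega
    rw [this]
  rw [hgoal]
  have ha1 : a1 ≤ n + 1 := by omega
  have hn5 : n5 ≤ n + 1 := by omega
  nlinarith [hlb, hq1, hq4, ha1, hn5]
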